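/- Suppose T is an Aronszajn tree and E ⊆ ω₁ is unbounded. If there is an order-preserving f : T_E → ℚ such that whenever x,y,z ∈ T_E with f(x)=f(y)=f(z), x<y, and x<z, then y and z are comparable, then there is a strictly order-preserving map from T_E into ℚ. -/

import Mathlib

open Cardinal Set

/-- The first uncountable ordinal. -/
noncomputable def omega1 : Ordinal := (Cardinal.aleph 1).ord

/-- A tree of height `ω₁`: a partial order equipped with a rank (height) function into the
countable ordinals which is strictly monotone, has countable levels, and whose sets of
predecessors are linearly ordered. -/
structure OmegaOneTree.{u_1, u_2} (T : Type u_1) [PartialOrder T] where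
  rk : T → Ordinal.{u_2}
  rk_lt_omega1 : ∀ x, rk x < omega1
  rk_strictMono : ∀ {x y : T}, x < y → rk x < rk y
  levels_countable : ∀ β : Ordinal, {x : T | rk x = β}.Countable
  pred_linear : ∀ x y z : T, y ≤ x → z ≤ x → y ≤ z ∨ z ≤ y

/-- `C` is a closed unbounded subset of `ω₁`. -/
def IsClubBelow (C : Set Ordinal) : Prop :=
  C ⊆ Set.Iio omega1 ∧ (∀ α < omega1, ∃ β ∈ C, α < β) ∧
    ∀ δ, 0 < δ → δ < omega1 → (∀ β < δ, ∃ γ ∈ C, β < γ ∧ γ < δ) → δ ∈ C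

/-- `S` is a stationary subset of `ω₁`. -/
def IsStationaryBelow (S : Set Ordinal) : Prop :=
  S ⊆ Set.Iio omega1 ∧ ∀ C, IsClubBelow C → (S ∩ C).Nonempty

/-- If `T` is an Aronszajn tree, `E ⊆ ω₁` is unbounded, and there is an
order-preserving `f : T_E → ℚ` such that `f x = f y = f z`, `x < y`, `x < z` imply `y, z`
comparable, then there is a strictly order-preserving map from `T_E` into `ℚ`. -/
theorem stmt5 {T : Type*} [PartialOrder T] (t : OmegaOneTree T)
    (hAron : ∀ c : Set T, IsChain (· ≤ ·) c → c.Countable)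
    (E : Set Ordinal) (hE : E ⊆ Set.Iio omega1)
    (hEunbdd : ∀ α < omega1, ∃ β ∈ E, α ≤ β)
    (f : {x : T // t.rk x ∈ E} → ℚ)
    (hmono : ∀ x y : {x : T // t.rk x ∈ E}, (x : T) ≤ (y : T) → f x ≤ f y)
    (hweak : ∀ x y z : {x : T // t.rk x ∈ E}, f x = f y → f x = f z →
      (x : T) < (y : T) → (x : T) < (z : T) → ((y : T) ≤ (z : T) ∨ (z : T) ≤ (y : T))) :
    ∃ g : {x : T // t.rk x ∈ E} → ℚ,
      ∀ x y : {x : T // t.rk x ∈ E}, (x : T) < (y : T) → g x < g y := by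
  classical
  -- each fiber-predecessor set has an element of minimal rank
  have hmin : ∀ y : {x : T // t.rk x ∈ E}, ∃ x : {x : T // t.rk x ∈ E},
      ((x : T) ≤ (y : T) ∧ f x = f y) ∧
      ∀ z : {x : T // t.rk x ∈ E}, (z : T) ≤ (y : T) → f z = f y →
        t.rk (x : T) ≤ t.rk (z : T) := by
    intro y
    have hwf : WellFounded (fun a b : {x : T // t.rk x ∈ E} =>
        t.rk (a : T) < t.rk (b : T)) :=
      InvImage.wf (fun a : {x : T // t.rk x ∈ E} => t.rk (a : T)) Ordinal.lt_wf
    obtain ⟨x, hx, hxmin⟩ := hwf.has_min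
      {x : {x : T // t.rk x ∈ E} | (x : T) ≤ (y : T) ∧ f x = f y} ⟨y, le_refl _, rfl⟩
    exact ⟨x, hx, fun z hz1 hz2 => not_lt.mp (hxmin z ⟨hz1, hz2⟩)⟩
  choose m hmP hmMin using hmin
  -- minimal elements agree along chains within a fiber
  have hmeq : ∀ y z : {x : T // t.rk x ∈ E}, (y : T) < (z : T) → f y = f z →
      m y = m z := by
    intro y z hyz hf
    have h1 : (m z : T) ≤ (y : T) := by
      rcases t.pred_linear z (m z) y (hmP z).1 (le_of_lt hyz) with h | h
      · exact h
      · have hr : t.rk (m z : T) ≤ t.rk (y : T) := hmMin z y (le_of_lt hyz) hf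
        rcases eq_or_lt_of_le h with he | hlt
        · exact le_of_eq he.symm
        · exact absurd (t.rk_strictMono hlt) (not_lt.mpr hr)
    have hr1 : t.rk (m y : T) ≤ t.rk (m z : T) :=
      hmMin y (m z) h1 ((hmP z).2.trans hf.symm)
    have hr2 : t.rk (m z : T) ≤ t.rk (m y : T) :=
      hmMin z (m y) ((hmP y).1.trans (le_of_lt hyz)) ((hmP y).2.trans hf)
    have hcomp := t.pred_linear y (m y) (m z) (hmP y).1 h1
    have hval : (m y : T) = (m z : T) := by
      rcases hcomp with h | h
      · rcases eq_or_lt_of_le h with he | hlt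
        · exact he
        · exact absurd (t.rk_strictMono hlt) (not_lt.mpr hr2)
      · rcases eq_or_lt_of_le h with he | hlt
        · exact he.symm
        · exact absurd (t.rk_strictMono hlt) (not_lt.mpr hr1)
    exact Subtype.ext hval
  -- each class `C x = {z | x ≤ z ∧ f z = f x}` is a chain
  have hchain : ∀ x : {x : T // t.rk x ∈ E},
      IsChain (· ≤ ·) {z : {x : T // t.rk x ∈ E} | (x : T) ≤ (z : T) ∧ f z = f x} := by
    intro x y hy z hz hne
    rcases eq_or_lt_of_le hy.1 with he | hy'
    · exact Or.inl (show y ≤ z from Subtype.coe_le_coe.mp (he ▸ hz.1))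
    rcases eq_or_lt_of_le hz.1 with he | hz'
    · exact Or.inr (show z ≤ y from Subtype.coe_le_coe.mp (he ▸ hy.1))
    rcases hweak x y z hy.2.symm hz.2.symm hy' hz' with h | h
    · exact Or.inl (Subtype.coe_le_coe.mp h)
    · exact Or.inr (Subtype.coe_le_coe.mp h)
  -- each class is countable
  have hcnt : ∀ x : {x : T // t.rk x ∈ E},
      Set.Countable {z : {x : T // t.rk x ∈ E} | (x : T) ≤ (z : T) ∧ f z = f x} := by
    intro x
    have hchT : IsChain (· ≤ ·)
        (Subtype.val '' {z : {x : T // t.rk x ∈ E} | (x : T) ≤ (z : T) ∧ f z = f x}) := by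
      rintro _ ⟨y, hy, rfl⟩ _ ⟨z, hz, rfl⟩ hne
      have : y ≠ z := fun h => hne (congrArg Subtype.val h)
      rcases hchain x hy hz this with h | h
      · exact Or.inl h
      · exact Or.inr h
    have hpre : Set.Countable ((Subtype.val : {x : T // t.rk x ∈ E} → T) ⁻¹'
        (Subtype.val '' {z : {x : T // t.rk x ∈ E} | (x : T) ≤ (z : T) ∧ f z = f x})) :=
      (hAron _ hchT).preimage Subtype.val_injective
    refine Set.Countable.mono ?_ hpre
    intro z hz
    exact ⟨z, hz, rfl⟩
  -- a strictly monotone rational labelling on each class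
  have hlab : ∀ x : {x : T // t.rk x ∈ E}, ∃ q : {x : T // t.rk x ∈ E} → ℚ,
      ∀ y : {x : T // t.rk x ∈ E}, (x : T) ≤ (y : T) → f y = f x →
      ∀ z : {x : T // t.rk x ∈ E}, (x : T) ≤ (z : T) → f z = f x →
      (y : T) < (z : T) → q y < q z := by
    intro x
    let Cx : Set {x : T // t.rk x ∈ E} :=
      {z : {x : T // t.rk x ∈ E} | (x : T) ≤ (z : T) ∧ f z = f x}
    haveI : Countable Cx := (hcnt x).to_subtype
    letI : LinearOrder Cx :=
      { (inferInstance : PartialOrder Cx) with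
        le_total := fun a b => by
          by_cases h : (a : {x : T // t.rk x ∈ E}) = b
          · exact Or.inl (le_of_eq (Subtype.ext h))
          · exact hchain x a.2 b.2 h
        toDecidableLE := Classical.decRel _ }
    obtain ⟨emb⟩ : Nonempty (Cx ↪o ℚ) := Order.embedding_from_countable_to_dense _ _
    refine ⟨fun y => if h : y ∈ Cx then emb ⟨y, h⟩ else 0,
      fun y hy1 hy2 z hz1 hz2 hlt => ?_⟩
    have hy : y ∈ Cx := ⟨hy1, hy2⟩
    have hz : z ∈ Cx := ⟨hz1, hz2⟩
    simp only [dif_pos hy, dif_pos hz]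
    exact emb.strictMono (show (⟨y, hy⟩ : Cx) < ⟨z, hz⟩ from Subtype.mk_lt_mk.mpr hlt)
  choose q hq using hlab
  -- embed ℚ ×ₗ ℚ into ℚ
  haveI : Countable (ℚ ×ₗ ℚ) := (inferInstance : Countable (ℚ × ℚ))
  obtain ⟨emb2⟩ : Nonempty ((ℚ ×ₗ ℚ) ↪o ℚ) := Order.embedding_from_countable_to_dense _ _
  refine ⟨fun y => emb2 (toLex (f y, q (m y) y)), fun x y hxy => ?_⟩
  apply emb2.strictMono
  rw [Prod.Lex.lt_iff]
  rcases eq_or_lt_of_le (hmono x y (le_of_lt hxy)) with hfe | hflt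
  · refine Or.inr ⟨hfe, ?_⟩
    have hm : m x = m y := hmeq x y hxy hfe
    have hqlt : q (m x) x < q (m x) y :=
      hq (m x) x (hmP x).1 (hmP x).2.symm y (hm ▸ (hmP y).1)
        (by rw [hm]; exact (hmP y).2.symm) hxy
    calc q (m x) x < q (m x) y := hqlt
    _ = q (m y) y := by rw [hm]
  · exact Or.inl hflt
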